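/- Assume θ ∈ [0, π/2] (equivalently ε ≤ 0) and that 4p(z)³ + 27q(z)² ≤ 0 for all z ∈ (0,1). Then the product p(z)·(1 + g(z)) is monotone decreasing on (0,1), and consequently the derivative of τ(z, 2) = √(−p(z))·cos((1/2)·arccos(g(z))) satisfies dτ(z,2)/dz = −(p·(1+g))′(z) / (2√(−2p(z)(1+g(z)))) ≥ 0 for all z ∈ (0,1). -/

import Mathlib

set_option maxHeartbeats 2000000 in
/-- the product `p(z)·(1 + g(z))` is monotone decreasing on (0,1), and
consequently `dτ(z,2)/dz = −(p(1+g))′/(2√(−2p(1+g))) ≥ 0` on (0,1), where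
`τ(z,2) = √(−p(z))·cos((1/2)·arccos g(z))`. -/
theorem p_one_plus_g_antitone (p0 p1 p2 θ A B G D E : ℝ)
    (h0 : 0 ≤ p0) (h1 : 0 ≤ p1) (h2 : 0 ≤ p2) (hsum : p0 + p1 + p2 = 1)
    (hθ : θ ∈ Set.Icc (0:ℝ) (Real.pi / 2))
    (hA : A = (1/6) * (1 - 3*p0^2 - 3*p1^2 - 3*p2^2))
    (hB : B = -(p0*p1 + p0*p2 + p1*p2))
    (hG : G = (1/27) * (3*p1 - 1) * (3*p2 - 1) * (3*p1 + 3*p2 - 2))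
    (hD : D = (1/27) * (18*(p0*p1 + p0*p2 + p1*p2) -
        27*(p0^2*p1 + p0*p1^2 + p0^2*p2 + p1^2*p2 + p0*p2^2 + p1*p2^2)))
    (hE : E = -2*p0*p1*p2 * Real.cos θ)
    (P Q g : ℝ → ℝ)
    (hP : P = fun z => A + B*z^2)
    (hQ : Q = fun z => G + D*z^2 + E*z^3)
    (hg : g = fun z => (3/2) * (Q z / P z) * Real.sqrt (-3 / P z))
    (hdisc : ∀ z ∈ Set.Ioo (0:ℝ) 1, 4*(P z)^3 + 27*(Q z)^2 ≤ 0) :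
    AntitoneOn (fun z => P z * (1 + g z)) (Set.Ioo (0:ℝ) 1) ∧
    ∀ z ∈ Set.Ioo (0:ℝ) 1,
      deriv (fun w => Real.sqrt (-(P w)) * Real.cos ((1/2) * Real.arccos (g w))) z
        = -(deriv (fun w => P w * (1 + g w)) z)
            / (2 * Real.sqrt (-2 * P z * (1 + g z))) ∧
      0 ≤ deriv (fun w => Real.sqrt (-(P w)) * Real.cos ((1/2) * Real.arccos (g w))) z := by
  obtain ⟨hθ0, hθπ⟩ := hθ
  have hc0 : 0 ≤ Real.cos θ :=
    Real.cos_nonneg_of_mem_Icc ⟨by linarith [Real.pi_pos], hθπ⟩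
  have hp0eq : p0 = 1 - p1 - p2 := by linarith
  subst hp0eq
  set t : ℝ := Real.sqrt 3 with htdef
  have ht0 : 0 < t := Real.sqrt_pos.2 (by norm_num)
  have ht2 : t^2 = 3 := Real.sq_sqrt (by norm_num)
  obtain ⟨s, hsdef⟩ : ∃ s : ℝ, s = (1-p1-p2)*p1 + (1-p1-p2)*p2 + p1*p2 := ⟨_, rfl⟩
  obtain ⟨r, hrdef⟩ : ∃ r : ℝ, r = (1-p1-p2)*p1*p2 := ⟨_, rfl⟩
  have hs0 : 0 ≤ s := by
    rw [hsdef]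
    have := mul_nonneg h0 h1; have := mul_nonneg h0 h2; have := mul_nonneg h1 h2
    nlinarith
  have hr0 : 0 ≤ r := by rw [hrdef]; exact mul_nonneg (mul_nonneg h0 h1) h2
  have hs3 : 3*s ≤ 1 := by
    rw [hsdef]
    nlinarith [sq_nonneg (p1-p2), sq_nonneg (1-p1-p2-p1), sq_nonneg (1-p1-p2-p2)]
  have h9r : 9*r ≤ s := by
    rw [hsdef, hrdef]
    nlinarith [mul_nonneg h0 (sq_nonneg (p1-p2)), mul_nonneg h1 (sq_nonneg (1-p1-p2-p2)),
      mul_nonneg h2 (sq_nonneg (1-p1-p2-p1))]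
  have hAval : A = s - 1/3 := by rw [hA, hsdef]; ring
  have hBval : B = -s := by rw [hB, hsdef]
  have hDval : D = 3*r - s/3 := by rw [hD, hsdef, hrdef]; ring
  have hGval : G = -r + s/3 - 2/27 := by rw [hG, hsdef, hrdef]; ring
  have hEval : E = -2*r*Real.cos θ := by rw [hE, hrdef]; ring
  have hB0 : B ≤ 0 := by rw [hBval]; linarith
  have hD0 : D ≤ 0 := by rw [hDval]; linarith
  have hE0 : E ≤ 0 := by
    rw [hEval]
    linarith [mul_nonneg hr0 hc0]
  -- positivity of -P on (0,1)
  have huP : ∀ x ∈ Set.Ioo (0:ℝ) 1, 0 < -P x := by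
    intro x hx
    rw [hP]; simp only
    rw [hAval, hBval]
    have hx2 : 0 < x^2 := pow_pos hx.1 2
    nlinarith [mul_nonneg (show (0:ℝ) ≤ 1/3 - s by linarith)
      (show (0:ℝ) ≤ 1 - x^2 by nlinarith [hx.2, hx.1])]
  have hsqrtP : ∀ x ∈ Set.Ioo (0:ℝ) 1, (0 < Real.sqrt (-P x)) ∧ (Real.sqrt (-P x))^2 = -P x := by
    intro x hx
    exact ⟨Real.sqrt_pos.2 (huP x hx), Real.sq_sqrt (huP x hx).le⟩
  have hbound : ∀ x ∈ Set.Ioo (0:ℝ) 1, |3*t*Q x| ≤ 2*(Real.sqrt (-P x))^3 := by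
    intro x hx
    obtain ⟨hv, hv2⟩ := hsqrtP x hx
    have hd := hdisc x hx
    have hsq : (3*t*Q x)^2 ≤ (2*(Real.sqrt (-P x))^3)^2 := by
      have e1 : (3*t*Q x)^2 = 27*(Q x)^2 := by linear_combination (9*(Q x)^2) * ht2
      have e2 : (2*(Real.sqrt (-P x))^3)^2 = 4*(-P x)^3 := by
        linear_combination (4*((Real.sqrt (-P x))^4 + (Real.sqrt (-P x))^2*(-P x) + (-P x)^2)) * hv2
      rw [e1, e2]
      nlinarith [hd]
    calc |3*t*Q x| = Real.sqrt ((3*t*Q x)^2) := (Real.sqrt_sq_eq_abs _).symm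
      _ ≤ Real.sqrt ((2*(Real.sqrt (-P x))^3)^2) := Real.sqrt_le_sqrt hsq
      _ = 2*(Real.sqrt (-P x))^3 := Real.sqrt_sq (by positivity)
  obtain ⟨C, hCdef⟩ : ∃ C : ℝ, C = 3*t/2 := ⟨_, rfl⟩
  have hC0 : 0 ≤ C := by rw [hCdef]; positivity
  obtain ⟨F, hFdef⟩ : ∃ F : ℝ → ℝ, F = fun z => P z + C * (Q z / Real.sqrt (-P z)) := ⟨_, rfl⟩
  obtain ⟨F', hF'def⟩ : ∃ F' : ℝ → ℝ, F' = fun x => 2*B*x +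
      C * (((2*D*x + 3*E*x^2) * Real.sqrt (-P x) - Q x * (1/(2*Real.sqrt (-P x)) * -(2*B*x))) /
        (Real.sqrt (-P x))^2) := ⟨_, rfl⟩
  have hderiv : ∀ x ∈ Set.Ioo (0:ℝ) 1, HasDerivAt F (F' x) x := by
    intro x hx
    obtain ⟨hv, hv2⟩ := hsqrtP x hx
    have hvne : Real.sqrt (-P x) ≠ 0 := ne_of_gt hv
    have hdP : HasDerivAt P (2*B*x) x := by
      rw [hP]
      have h' := ((hasDerivAt_pow 2 x).const_mul B).const_add A
      refine h'.congr_deriv ?_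
      push_cast; ring
    have hdQ : HasDerivAt Q (2*D*x + 3*E*x^2) x := by
      rw [hQ]
      have h' := (((hasDerivAt_pow 2 x).const_mul D).const_add G).add
        ((hasDerivAt_pow 3 x).const_mul E)
      refine h'.congr_deriv ?_
      push_cast; ring
    have hdV : HasDerivAt (fun z => Real.sqrt (-P z)) (1/(2*Real.sqrt (-P x)) * -(2*B*x)) x := by
      have h1 : HasDerivAt (fun z => -P z) (-(2*B*x)) x := hdP.neg
      have h2 := (Real.hasDerivAt_sqrt (ne_of_gt (huP x hx))).comp x h1
      simpa [Function.comp_def] using h2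
    rw [hFdef, hF'def]
    exact hdP.add ((hdQ.div hdV hvne).const_mul C)
  have hQ'le : ∀ x ∈ Set.Ioo (0:ℝ) 1, 2*D*x + 3*E*x^2 ≤ 0 := by
    intro x hx
    nlinarith [mul_nonneg (neg_nonneg.2 hD0) hx.1.le, mul_nonneg (neg_nonneg.2 hE0) (sq_nonneg x)]
  have hBx : ∀ x ∈ Set.Ioo (0:ℝ) 1, B*x ≤ 0 := by
    intro x hx
    exact mul_nonpos_iff.2 (Or.inr ⟨hB0, hx.1.le⟩)
  have hF'le : ∀ x ∈ Set.Ioo (0:ℝ) 1, F' x ≤ B*x := by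
    intro x hx
    obtain ⟨hv, hv2⟩ := hsqrtP x hx
    have hb3 := (abs_le.1 (hbound x hx)).1
    have hQ' := hQ'le x hx
    have hBx' := hBx x hx
    rw [hF'def]; simp only
    have hN : ((2*D*x + 3*E*x^2) * Real.sqrt (-P x) - Q x * (1/(2*Real.sqrt (-P x)) * -(2*B*x))) /
        (Real.sqrt (-P x))^2
        = ((2*D*x + 3*E*x^2) * (Real.sqrt (-P x))^2 + Q x * (B*x)) / (Real.sqrt (-P x))^3 := by
      field_simp
      ring
    rw [hN]
    have hterm : C * (((2*D*x + 3*E*x^2) * (Real.sqrt (-P x))^2 + Q x * (B*x)) /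
        (Real.sqrt (-P x))^3) ≤ -(B*x) := by
      rw [← mul_div_assoc, div_le_iff₀ (pow_pos hv 3)]
      rw [hCdef]
      nlinarith [mul_nonneg (mul_nonneg (neg_nonneg.2 hQ') ht0.le) (sq_nonneg (Real.sqrt (-P x))),
        mul_nonneg (neg_nonneg.2 hBx') (show (0:ℝ) ≤ 3*t*Q x + 2*(Real.sqrt (-P x))^3 by linarith)]
    linarith
  have hmono : AntitoneOn F (Set.Ioo (0:ℝ) 1) := by
    apply antitoneOn_of_deriv_nonpos (convex_Ioo 0 1)
    · intro x hx
      exact ((hderiv x hx).differentiableAt.continuousAt).continuousWithinAt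
    · rw [interior_Ioo]
      intro x hx
      exact (hderiv x hx).differentiableAt.differentiableWithinAt
    · rw [interior_Ioo]
      intro x hx
      rw [(hderiv x hx).deriv]
      linarith [hF'le x hx, hBx x hx]
  have hsq3 : ∀ w ∈ Set.Ioo (0:ℝ) 1, Real.sqrt (-3 / P w) = t / Real.sqrt (-P w) := by
    intro w hw
    rw [show -3 / P w = 3 / (-P w) by ring, Real.sqrt_div (by norm_num : (0:ℝ) ≤ 3)]
  have heq : ∀ z ∈ Set.Ioo (0:ℝ) 1, P z * (1 + g z) = F z := by
    intro z hz
    obtain ⟨hv, hv2⟩ := hsqrtP z hz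
    have hPne : P z ≠ 0 := by
      have h' := huP z hz; intro h''; rw [h''] at h'; simp at h'
    have hvne : Real.sqrt (-P z) ≠ 0 := ne_of_gt hv
    rw [hg]; simp only
    rw [hsq3 z hz, hFdef]; simp only
    rw [hCdef]
    field_simp
  have hle0 : ∀ z ∈ Set.Ioo (0:ℝ) 1, F z ≤ 0 := by
    intro z hz
    obtain ⟨hv, hv2⟩ := hsqrtP z hz
    have hb := (abs_le.1 (hbound z hz)).2
    rw [hFdef]; simp only
    have hterm : C * (Q z / Real.sqrt (-P z)) ≤ (Real.sqrt (-P z))^2 := by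
      rw [hCdef, ← mul_div_assoc, div_le_iff₀ hv]
      nlinarith
    linarith
  have hneg : ∀ z ∈ Set.Ioo (0:ℝ) 1, F z < 0 := by
    intro z hz
    obtain ⟨hv, hv2⟩ := hsqrtP z hz
    rcases eq_or_lt_of_le hB0 with hB0'|hBneg
    · have hs' : s = 0 := by rw [hBval] at hB0'; linarith
      have hr' : r = 0 := by linarith
      have hQz : Q z = -2/27 := by
        rw [hQ]; simp only
        rw [hGval, hDval, hEval, hs', hr']; ring
      have hPz : P z < 0 := by linarith [huP z hz]
      have hQv : Q z / Real.sqrt (-P z) ≤ 0 :=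
        div_nonpos_iff.2 (Or.inr ⟨by rw [hQz]; norm_num, Real.sqrt_nonneg _⟩)
      have hCm : C * (Q z / Real.sqrt (-P z)) ≤ 0 := mul_nonpos_iff.2 (Or.inl ⟨hC0, hQv⟩)
      rw [hFdef]; simp only
      linarith
    · have hcont : ContinuousOn F (Set.Ioo (0:ℝ) 1) := fun x hx =>
        ((hderiv x hx).differentiableAt.continuousAt).continuousWithinAt
      have hstrict : StrictAntiOn F (Set.Ioo (0:ℝ) 1) := by
        apply strictAntiOn_of_deriv_neg (convex_Ioo 0 1) hcont
        rw [interior_Ioo]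
        intro x hx
        rw [(hderiv x hx).deriv]
        have h' := hF'le x hx
        have hbx : B*x < 0 := mul_neg_of_neg_of_pos hBneg hx.1
        linarith
      have hz2 : z/2 ∈ Set.Ioo (0:ℝ) 1 := ⟨by linarith [hz.1], by linarith [hz.1, hz.2]⟩
      have h' := hstrict hz2 hz (by linarith [hz.1])
      linarith [hle0 (z/2) hz2]
  have hpt : ∀ w ∈ Set.Ioo (0:ℝ) 1,
      Real.sqrt (-(P w)) * Real.cos ((1/2) * Real.arccos (g w)) = Real.sqrt (-2 * F w) / 2 := by
    intro w hw
    obtain ⟨hvw, hvw2⟩ := hsqrtP w hw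
    have hFw := hle0 w hw
    have hbw := hbound w hw
    have hPne : P w ≠ 0 := by
      have h' := huP w hw; intro h''; rw [h''] at h'; simp at h'
    have hvne : Real.sqrt (-P w) ≠ 0 := ne_of_gt hvw
    have key : g w * (2*(Real.sqrt (-P w))^3) = -(3*t*Q w) := by
      rw [hg]; simp only
      rw [hsq3 w hw]
      field_simp
      linear_combination (Q w) * hvw2
    have hgw : g w = -(3*t*Q w) / (2*(Real.sqrt (-P w))^3) := by
      rw [eq_div_iff (by positivity : (2*(Real.sqrt (-P w))^3) ≠ 0)]
      exact key
    have hg1 : g w ≤ 1 := by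
      rw [hgw, div_le_one (by positivity)]
      linarith [(abs_le.1 hbw).1]
    have hg2 : -1 ≤ g w := by
      rw [hgw, le_div_iff₀ (by positivity)]
      linarith [(abs_le.1 hbw).2]
    rw [show (1/2) * Real.arccos (g w) = Real.arccos (g w) / 2 by ring]
    rw [Real.cos_half (by linarith [Real.arccos_nonneg (g w), Real.pi_pos])
      (Real.arccos_le_pi (g w))]
    rw [Real.cos_arccos hg2 hg1]
    rw [← Real.sqrt_mul (huP w hw).le]
    rw [show -P w * ((1 + g w) / 2) = (-2 * F w) * (1/4) by
      linear_combination (-(1/2)) * heq w hw]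
    rw [Real.sqrt_mul (by linarith : (0:ℝ) ≤ -2 * F w)]
    rw [show Real.sqrt (1/4) = 1/2 by
      rw [show (1/4:ℝ) = (1/2)^2 by norm_num, Real.sqrt_sq (by norm_num)]]
    ring
  constructor
  · intro a ha b hb hab
    simp only
    rw [heq b hb, heq a ha]
    exact hmono ha hb hab
  · intro z hz
    obtain ⟨hv, hv2⟩ := hsqrtP z hz
    have hFz := hneg z hz
    have hmemIoo : Set.Ioo (0:ℝ) 1 ∈ nhds z := Ioo_mem_nhds hz.1 hz.2
    have hEv : (fun w => Real.sqrt (-(P w)) * Real.cos ((1/2) * Real.arccos (g w)))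
        =ᶠ[nhds z] (fun w => Real.sqrt (-2 * F w) / 2) := by
      filter_upwards [hmemIoo] with w hw
      exact hpt w hw
    have hdF := hderiv z hz
    have hne2 : -2 * F z ≠ 0 := ne_of_gt (by linarith)
    have hd2 : HasDerivAt (fun w => Real.sqrt (-2 * F w) / 2)
        (1/(2*Real.sqrt (-2 * F z)) * (-2 * F' z) / 2) z := by
      have hinner : HasDerivAt (fun w => -2 * F w) (-2 * F' z) z := hdF.const_mul (-2)
      have h2 := (Real.hasDerivAt_sqrt hne2).comp z hinner
      exact (by simpa [Function.comp_def] using h2 :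
        HasDerivAt (fun w => Real.sqrt (-2 * F w)) (1/(2*Real.sqrt (-2 * F z)) * (-2 * F' z)) z).div_const 2
    have hderivF : deriv (fun w => P w * (1 + g w)) z = F' z := by
      have hEv2 : (fun w => P w * (1 + g w)) =ᶠ[nhds z] F := by
        filter_upwards [hmemIoo] with w hw
        exact heq w hw
      rw [hEv2.deriv_eq, hdF.deriv]
    have hF2 : -2 * P z * (1 + g z) = -2 * F z := by linear_combination (-2) * heq z hz
    have hsq2 : 0 < Real.sqrt (-2 * F z) := Real.sqrt_pos.2 (by linarith)
    refine ⟨?_, ?_⟩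
    · rw [hEv.deriv_eq, hd2.deriv, hderivF, hF2]
      field_simp
    · rw [hEv.deriv_eq, hd2.deriv]
      have hF'z := hF'le z hz
      have hbz := hBx z hz
      apply div_nonneg _ (by norm_num : (0:ℝ) ≤ 2)
      apply mul_nonneg (by positivity) (by linarith)
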